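/- arXiv:2603.13090 — 2 statements merged into one kernel-verified Lean document; each statement's English description precedes it below -/
import Mathlib

section
/- Let d ≥ 1 and T > 0. Let ρ : ℝ → Matrix (Fin d) (Fin d) ℂ be differentiable with ρ'(t) = L_t(ρ(t)) for all t ∈ [0,T], where L_t is a family of linear superoperators, set ρ₀ = ρ(0), and suppose ‖ρ(t)‖₁ = 1 for all t ∈ [0,T] (as holds for density matrices). Let H̃ : ℝ → Matrix (Fin d) (Fin d) ℂ be a continuous family of Hermitian matrices, define L̃_t(A) = −i(H̃(t)·A − A·H̃(t)), and let U : ℝ → Matrix (Fin d) (Fin d) ℂ be differentiable with U(0) = 1, U'(t) = −i·H̃(t)·U(t), and suppose U(t) is unitary with U(t)·ρ₀·U(t)ᴴ = ρ₀ for all t ∈ [0,T]. If C ≥ 0 is a constant satisfying ‖L_t(A) − L̃_t(A)‖₁ ≤ C·‖A‖₁ for all t ∈ [0,T] and all matrices A, then T ≥ ‖ρ(T) − ρ₀‖₁ / C whenever C > 0; equivalently ‖ρ(T) − ρ₀‖₁ ≤ C·T. -/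
open Matrix
open scoped ComplexOrder

/- Matrices are equipped with the Frobenius norm so that curves of matrices can be
differentiated; the statement itself is phrased via the trace norm defined below. -/
attribute [local instance] Matrix.frobeniusNormedAddCommGroup Matrix.frobeniusNormedSpace
attribute [local instance] Matrix.frobeniusNormedRing Matrix.frobeniusNormedAlgebra
set_option maxHeartbeats 1000000

/-- Trace norm (Schatten 1-norm): `‖A‖₁ = Tr √(Aᴴ A)`. -/
noncomputable def traceNorm {d : ℕ} (A : Matrix (Fin d) (Fin d) ℂ) : ℝ :=
  ((((Matrix.posSemidef_conjTranspose_mul_self A).1.eigenvectorUnitary :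
      Matrix (Fin d) (Fin d) ℂ) *
    diagonal (((↑) : ℝ → ℂ) ∘ (√·) ∘ (Matrix.posSemidef_conjTranspose_mul_self A).1.eigenvalues) *
    (star (Matrix.posSemidef_conjTranspose_mul_self A).1.eigenvectorUnitary :
      Matrix (Fin d) (Fin d) ℂ)).trace).re
lemma sigma_deriv_eq {d : ℕ} (H U P Q : Matrix (Fin d) (Fin d) ℂ) (hH : Hᴴ = H) :
    ((-Complex.I • (H * U))ᴴ * P + Uᴴ * Q) * U + Uᴴ * P * (-Complex.I • (H * U))
      = Uᴴ * (Q - (-Complex.I) • (H * P - P * H)) * U := by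
  simp only [neg_smul, conjTranspose_neg, conjTranspose_smul, conjTranspose_mul, hH,
    RCLike.star_def, Complex.conj_I, Matrix.add_mul, Matrix.mul_sub, Matrix.sub_mul,
    Matrix.neg_mul, Matrix.mul_neg, smul_mul_assoc, mul_smul_comm, smul_sub, neg_neg,
    smul_neg, Matrix.mul_assoc]
  module

lemma traceNorm_eq_sum {d : ℕ} (A : Matrix (Fin d) (Fin d) ℂ) :
    traceNorm A = ∑ i, Real.sqrt ((Matrix.posSemidef_conjTranspose_mul_self A).1.eigenvalues i) := by
  unfold traceNorm
  rw [trace_mul_cycle, Unitary.coe_star_mul_self, one_mul, trace_diagonal]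
  simp

lemma col_normSq {d : ℕ} (X : Matrix (Fin d) (Fin d) ℂ) (i : Fin d) :
    ∑ k, Complex.normSq ((X * (Matrix.posSemidef_conjTranspose_mul_self X).1.eigenvectorUnitary.1) k i)
      = (Matrix.posSemidef_conjTranspose_mul_self X).1.eigenvalues i := by
  set hH := (Matrix.posSemidef_conjTranspose_mul_self X).1
  set V : Matrix (Fin d) (Fin d) ℂ := hH.eigenvectorUnitary.1 with hV
  set Y := X * V with hYdef
  have hYY : Yᴴ * Y = Matrix.diagonal (Complex.ofReal ∘ hH.eigenvalues) := by
    have : star V * (Xᴴ * X) * V = Matrix.diagonal (Complex.ofReal ∘ hH.eigenvalues) := by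
      have h := hH.conjStarAlgAut_star_eigenvectorUnitary
      rw [Unitary.conjStarAlgAut_star_apply] at h; exact h
    calc Yᴴ * Y = star V * (Xᴴ * X) * V := by
          simp only [hYdef, conjTranspose_mul, Matrix.star_eq_conjTranspose, Matrix.mul_assoc]
    _ = Matrix.diagonal (Complex.ofReal ∘ hH.eigenvalues) := by
          rw [Matrix.mul_assoc] at this ⊢; exact this
  have h2 := congrArg (fun M => (M i i).re) hYY
  simp only [Matrix.mul_apply, Matrix.diagonal_apply_eq, Matrix.conjTranspose_apply,
    Function.comp_apply, Complex.ofReal_re] at h2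
  rw [← h2, Complex.re_sum]
  congr 1; ext k
  rw [show star (Y k i) * Y k i = ((Complex.normSq (Y k i) : ℂ)) by
    rw [Complex.normSq_eq_conj_mul_self]; rfl]
  exact (Complex.ofReal_re _).symm

lemma re_trace_mul_le_traceNorm {d : ℕ} (W X : Matrix (Fin d) (Fin d) ℂ)
    (hW : W ∈ Matrix.unitaryGroup (Fin d) ℂ) : ((W * X).trace).re ≤ traceNorm X := by
  classical
  set hH := (Matrix.posSemidef_conjTranspose_mul_self X).1
  set V : Matrix (Fin d) (Fin d) ℂ := hH.eigenvectorUnitary.1 with hVdef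
  have hV : V ∈ Matrix.unitaryGroup (Fin d) ℂ := hH.eigenvectorUnitary.2
  set lam := hH.eigenvalues with hlam
  set Y := X * V with hYdef
  set Z := Vᴴ * W with hZdef
  have hZ : Z ∈ Matrix.unitaryGroup (Fin d) ℂ := by
    rw [hZdef, ← Matrix.star_eq_conjTranspose]
    exact mul_mem (Unitary.star_mem hV) hW
  have hrow : ∀ i, ∑ k, Complex.normSq (Z i k) = 1 := by
    intro i
    have h1 : Z * star Z = 1 := (Matrix.mem_unitaryGroup_iff).mp hZ
    have h2 := congrArg (fun M => (M i i).re) h1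
    simp only [Matrix.mul_apply, Matrix.star_apply, Matrix.one_apply_eq, Complex.one_re] at h2
    rw [← h2, Complex.re_sum]
    congr 1; ext k
    rw [show Z i k * star (Z i k) = ((Complex.normSq (Z i k) : ℂ)) by
      rw [← Complex.mul_conj]; rfl]
    exact (Complex.ofReal_re _).symm
  have htr : (W * X).trace = (Z * Y).trace := by
    have hXY : Y * Vᴴ = X := by
      rw [hYdef, Matrix.mul_assoc, ← Matrix.star_eq_conjTranspose,
        (Matrix.mem_unitaryGroup_iff).mp hV, Matrix.mul_one]
    calc (W * X).trace = (W * Y * Vᴴ).trace := by rw [Matrix.mul_assoc, hXY]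
    _ = (Vᴴ * W * Y).trace := by rw [Matrix.trace_mul_cycle]
    _ = (Z * Y).trace := by rw [hZdef]
  rw [htr, Matrix.trace, traceNorm_eq_sum, Complex.re_sum]
  refine Finset.sum_le_sum fun i _ => ?_
  have habs : ‖∑ k, Z i k * Y k i‖ ≤ Real.sqrt (lam i) := by
    have h1 : ‖∑ k, Z i k * Y k i‖ ≤ ∑ k, ‖Z i k‖ * ‖Y k i‖ := by
      refine (norm_sum_le _ _).trans_eq ?_
      simp [norm_mul]
    refine h1.trans ?_
    have hcs := Finset.sum_mul_sq_le_sq_mul_sq Finset.univ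
      (fun k => ‖Z i k‖) (fun k => ‖Y k i‖)
    have hsum1 : ∑ k, ‖Z i k‖ ^ 2 = 1 := by
      simp only [Complex.sq_norm]; exact hrow i
    have hsum2 : ∑ k, ‖Y k i‖ ^ 2 = lam i := by
      simp only [Complex.sq_norm]; exact col_normSq X i
    rw [hsum1, hsum2, one_mul] at hcs
    have hnn : 0 ≤ ∑ k, ‖Z i k‖ * ‖Y k i‖ :=
      Finset.sum_nonneg fun k _ => mul_nonneg (norm_nonneg _) (norm_nonneg _)
    calc ∑ k, ‖Z i k‖ * ‖Y k i‖
        = Real.sqrt ((∑ k, ‖Z i k‖ * ‖Y k i‖) ^ 2) := by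
          rw [Real.sqrt_sq hnn]
    _ ≤ Real.sqrt (lam i) := Real.sqrt_le_sqrt hcs
  calc ((Z * Y).diag i).re ≤ ‖(Z * Y).diag i‖ := Complex.re_le_norm _
  _ = ‖∑ k, Z i k * Y k i‖ := by rw [Matrix.diag_apply, Matrix.mul_apply]
  _ ≤ Real.sqrt (lam i) := habs

lemma YtY_diag {d : ℕ} (X : Matrix (Fin d) (Fin d) ℂ) :
    (X * (Matrix.posSemidef_conjTranspose_mul_self X).1.eigenvectorUnitary.1)ᴴ *
      (X * (Matrix.posSemidef_conjTranspose_mul_self X).1.eigenvectorUnitary.1)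
      = Matrix.diagonal (Complex.ofReal ∘ (Matrix.posSemidef_conjTranspose_mul_self X).1.eigenvalues) := by
  set hH := (Matrix.posSemidef_conjTranspose_mul_self X).1
  set V : Matrix (Fin d) (Fin d) ℂ := hH.eigenvectorUnitary.1 with hV
  have : star V * (Xᴴ * X) * V = Matrix.diagonal (Complex.ofReal ∘ hH.eigenvalues) := by
    have h := hH.conjStarAlgAut_star_eigenvectorUnitary
    rw [Unitary.conjStarAlgAut_star_apply] at h; exact h
  calc (X * V)ᴴ * (X * V) = star V * (Xᴴ * X) * V := by
        simp only [conjTranspose_mul, Matrix.star_eq_conjTranspose, Matrix.mul_assoc]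
  _ = Matrix.diagonal (Complex.ofReal ∘ hH.eigenvalues) := by
        rw [Matrix.mul_assoc] at this ⊢; exact this

lemma exists_unitary_trace_eq {d : ℕ} (X : Matrix (Fin d) (Fin d) ℂ) :
    ∃ W ∈ Matrix.unitaryGroup (Fin d) ℂ, ((W * X).trace).re = traceNorm X := by
  classical
  set hH := (Matrix.posSemidef_conjTranspose_mul_self X).1
  set V : Matrix (Fin d) (Fin d) ℂ := hH.eigenvectorUnitary.1 with hVdef
  have hV : V ∈ Matrix.unitaryGroup (Fin d) ℂ := hH.eigenvectorUnitary.2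
  set lam := hH.eigenvalues with hlam
  have hlamnn : ∀ i, 0 ≤ lam i :=
    (Matrix.posSemidef_conjTranspose_mul_self X).eigenvalues_nonneg
  set Y := X * V with hYdef
  set y : Fin d → EuclideanSpace ℂ (Fin d) := fun i => WithLp.toLp 2 (fun k => Y k i) with hy
  have hinner : ∀ i j, (inner ℂ (y i) (y j) : ℂ) = if i = j then (lam i : ℂ) else 0 := by
    intro i j
    have h := congrArg (fun M => M i j) (YtY_diag X)
    simp only [Matrix.mul_apply, Matrix.conjTranspose_apply, Matrix.diagonal_apply,
      Function.comp_apply] at h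
    rw [PiLp.inner_apply]
    simp only [RCLike.inner_apply']
    exact h
  set v : Fin d → EuclideanSpace ℂ (Fin d) :=
    fun i => (((Real.sqrt (lam i) : ℝ) : ℂ))⁻¹ • y i with hv
  have horth : Orthonormal ℂ (Set.restrict {i | lam i ≠ 0} v) := by
    rw [orthonormal_iff_ite]
    rintro ⟨i, hi⟩ ⟨j, hj⟩
    simp only [Set.restrict_apply, hv]
    show inner ℂ ((((Real.sqrt (lam i) : ℝ) : ℂ))⁻¹ • y i) ((((Real.sqrt (lam j) : ℝ) : ℂ))⁻¹ • y j) = _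
    rw [inner_smul_left, inner_smul_right, hinner]
    by_cases hij : i = j
    · subst hij
      simp only [Subtype.mk.injEq, if_pos rfl, map_inv₀, Complex.conj_ofReal, if_true]
      norm_cast
      rw [← mul_assoc, ← mul_inv, Real.mul_self_sqrt (hlamnn i), inv_mul_cancel₀ hi]
    · simp only [Subtype.mk.injEq, if_neg hij]
      simp [hij]
  have card_ι : Module.finrank ℂ (EuclideanSpace ℂ (Fin d)) = Fintype.card (Fin d) := by
    simp [finrank_euclideanSpace]
  obtain ⟨b, hb⟩ := horth.exists_orthonormalBasis_extension_of_card_eq card_ι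
  set M : Matrix (Fin d) (Fin d) ℂ := Matrix.of (fun k i => (b i : EuclideanSpace ℂ (Fin d)) k) with hM
  have hMu : M ∈ Matrix.unitaryGroup (Fin d) ℂ := by
    rw [Matrix.mem_unitaryGroup_iff']
    ext i j
    have hbo := b.orthonormal
    rw [orthonormal_iff_ite] at hbo
    have := hbo i j
    rw [PiLp.inner_apply] at this
    simp only [RCLike.inner_apply'] at this
    simp only [Matrix.mul_apply, Matrix.star_apply, hM, Matrix.of_apply, Matrix.one_apply]
    rw [← this]
    simp only [starRingEnd_apply]
  refine ⟨V * Mᴴ, ?_, ?_⟩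
  · rw [← Matrix.star_eq_conjTranspose]
    exact mul_mem hV (Unitary.star_mem hMu)
  · have htr : ((V * Mᴴ) * X).trace = (Mᴴ * Y).trace := by
      rw [Matrix.mul_assoc, Matrix.trace_mul_comm, Matrix.mul_assoc, hYdef]
    have hterm : ∀ i, (∑ k, (Mᴴ) i k * Y k i) = ((Real.sqrt (lam i) : ℝ) : ℂ) := by
      intro i
      have hsum : (∑ k, (Mᴴ) i k * Y k i) = (inner ℂ (b i) (y i) : ℂ) := by
        rw [PiLp.inner_apply]
        simp only [RCLike.inner_apply']
        refine Finset.sum_congr rfl fun k _ => ?_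
        simp only [Matrix.conjTranspose_apply, Matrix.star_apply, hM, Matrix.of_apply,
          starRingEnd_apply]
        rfl
      rw [hsum]
      by_cases hi : lam i = 0
      · have h0 : (inner ℂ (y i) (y i) : ℂ) = 0 := by
          rw [hinner, if_pos rfl, hi, Complex.ofReal_zero]
        have hy0 : y i = 0 := inner_self_eq_zero.mp h0
        rw [hy0, inner_zero_right, hi, Real.sqrt_zero, Complex.ofReal_zero]
      · rw [hb i hi, hv]
        simp only [inner_smul_left, map_inv₀, Complex.conj_ofReal]
        rw [hinner, if_pos rfl]
        norm_cast
        have hpos : (0:ℝ) < lam i := lt_of_le_of_ne (hlamnn i) (Ne.symm hi)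
        have hsne : Real.sqrt (lam i) ≠ 0 := ne_of_gt (Real.sqrt_pos.mpr hpos)
        rw [inv_mul_eq_div, div_eq_iff hsne, Real.mul_self_sqrt (hlamnn i)]
    rw [htr, Matrix.trace]
    simp only [Matrix.diag_apply, Matrix.mul_apply]
    rw [traceNorm_eq_sum]
    calc (∑ i, ∑ k, (Mᴴ) i k * Y k i).re = (∑ i, ((Real.sqrt (lam i) : ℝ) : ℂ)).re := by
          congr 1; exact Finset.sum_congr rfl fun i _ => hterm i
    _ = ∑ i, Real.sqrt (lam i) := by
          rw [Complex.re_sum]; simp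

/-- general speed limit for controlled open quantum systems, Eq. (8).
If `ρ` solves `ρ' = L_t ρ` on `[0,T]` with `‖ρ(t)‖₁ = 1`, `H̃` is a continuous family of
Hermitian matrices with commutator generator `L̃_t(A) = −i(H̃(t)A − AH̃(t))`, `U` solves
`U' = −iH̃U`, `U(0) = 1`, with `U(t)` unitary fixing `ρ₀ = ρ(0)` on `[0,T]`, and
`C ≥ 0` satisfies `‖L_t(A) − L̃_t(A)‖₁ ≤ C‖A‖₁` for all `t ∈ [0,T]` and all `A`, then
`‖ρ(T) − ρ₀‖₁ ≤ C·T`; equivalently, `T ≥ ‖ρ(T) − ρ₀‖₁ / C` whenever `C > 0`. -/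
theorem general_speed_limit (d : ℕ) (hd : 1 ≤ d) (T : ℝ) (hT : 0 < T)
    (L : ℝ → (Matrix (Fin d) (Fin d) ℂ →ₗ[ℂ] Matrix (Fin d) (Fin d) ℂ))
    (ρ : ℝ → Matrix (Fin d) (Fin d) ℂ)
    (hρ : ∀ t ∈ Set.Icc (0 : ℝ) T, HasDerivAt ρ (L t (ρ t)) t)
    (hρnorm : ∀ t ∈ Set.Icc (0 : ℝ) T, traceNorm (ρ t) = 1)
    (Htil : ℝ → Matrix (Fin d) (Fin d) ℂ)
    (hHcont : Continuous Htil) (hHherm : ∀ t, (Htil t).IsHermitian)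
    (U : ℝ → Matrix (Fin d) (Fin d) ℂ) (hU0 : U 0 = 1)
    (hU : ∀ t ∈ Set.Icc (0 : ℝ) T, HasDerivAt U ((-Complex.I) • (Htil t * U t)) t)
    (hUunitary : ∀ t ∈ Set.Icc (0 : ℝ) T, U t ∈ Matrix.unitaryGroup (Fin d) ℂ)
    (hUfix : ∀ t ∈ Set.Icc (0 : ℝ) T, U t * ρ 0 * (U t)ᴴ = ρ 0)
    (C : ℝ) (hC : 0 ≤ C)
    (hCbound : ∀ t ∈ Set.Icc (0 : ℝ) T, ∀ A : Matrix (Fin d) (Fin d) ℂ,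
      traceNorm (L t A - (-Complex.I) • (Htil t * A - A * Htil t)) ≤ C * traceNorm A) :
    traceNorm (ρ T - ρ 0) ≤ C * T ∧ (0 < C → traceNorm (ρ T - ρ 0) / C ≤ T) := by
  classical
  have hTT : T ∈ Set.Icc (0:ℝ) T := ⟨le_of_lt hT, le_refl _⟩
  have h0T : (0:ℝ) ∈ Set.Icc (0:ℝ) T := ⟨le_refl _, le_of_lt hT⟩
  obtain ⟨W, hWu, hWeq⟩ := exists_unitary_trace_eq (ρ T - ρ 0)
  have hUTu : U T ∈ Matrix.unitaryGroup (Fin d) ℂ := hUunitary T hTT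
  set W' : Matrix (Fin d) (Fin d) ℂ := (U T)ᴴ * W * U T with hW'def
  have hW'u : W' ∈ Matrix.unitaryGroup (Fin d) ℂ := by
    rw [hW'def, ← Matrix.star_eq_conjTranspose]
    exact mul_mem (mul_mem (Unitary.star_mem hUTu) hWu) hUTu
  -- the linear functional A ↦ Re tr (W' A)
  let F : Matrix (Fin d) (Fin d) ℂ →ₗ[ℝ] ℝ :=
    { toFun := fun A => ((W' * A).trace).re
      map_add' := by intro A B; simp [Matrix.mul_add]
      map_smul' := by intro r A; simp [Matrix.mul_smul, Complex.smul_re] }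
  -- generator difference
  set Δ : ℝ → Matrix (Fin d) (Fin d) ℂ :=
    fun t => L t (ρ t) - (-Complex.I) • (Htil t * ρ t - ρ t * Htil t) with hΔdef
  set g : ℝ → ℝ := fun t => F ((U t)ᴴ * ρ t * U t) with hgdef
  set g' : ℝ → ℝ := fun t => F ((U t)ᴴ * Δ t * U t) with hg'def
  have key : ∀ t ∈ Set.Icc (0:ℝ) T, HasDerivAt g (g' t) t := by
    intro t ht
    have hUt := hU t ht
    have hρt := hρ t ht
    have hst : HasDerivAt (fun s => (U s)ᴴ) ((-Complex.I • (Htil t * U t))ᴴ) t := by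
      exact hUt.star
    have hprod := (hst.mul hρt).mul hUt
    simp only [Pi.mul_apply] at hprod
    rw [sigma_deriv_eq _ _ _ _ (hHherm t)] at hprod
    exact (F.toContinuousLinearMap.hasFDerivAt.comp_hasDerivAt t hprod)
  have hbound : ∀ t ∈ Set.Icc (0:ℝ) T, ‖g' t‖ ≤ C := by
    intro t ht
    have hQu : U t * (W' * (U t)ᴴ) ∈ Matrix.unitaryGroup (Fin d) ℂ := by
      rw [← Matrix.star_eq_conjTranspose]
      exact mul_mem (hUunitary t ht) (mul_mem hW'u (Unitary.star_mem (hUunitary t ht)))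
    have htrace : g' t = (((U t * (W' * (U t)ᴴ)) * Δ t).trace).re := by
      rw [hg'def]
      show ((W' * ((U t)ᴴ * Δ t * U t)).trace).re = _
      rw [show W' * ((U t)ᴴ * Δ t * U t) = (W' * (U t)ᴴ * Δ t) * U t by
        simp only [Matrix.mul_assoc]]
      rw [Matrix.trace_mul_comm]
      rw [show U t * (W' * (U t)ᴴ * Δ t) = (U t * (W' * (U t)ᴴ)) * Δ t by
        simp only [Matrix.mul_assoc]]
    have hd1 : g' t ≤ C := by
      rw [htrace]
      calc (((U t * (W' * (U t)ᴴ)) * Δ t).trace).re ≤ traceNorm (Δ t) :=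
            re_trace_mul_le_traceNorm _ _ hQu
      _ ≤ C * traceNorm (ρ t) := hCbound t ht (ρ t)
      _ = C := by rw [hρnorm t ht, mul_one]
    have hd2 : -(g' t) ≤ C := by
      have hnegu : -(U t * (W' * (U t)ᴴ)) ∈ Matrix.unitaryGroup (Fin d) ℂ := by
        rw [Matrix.mem_unitaryGroup_iff'] at hQu ⊢
        rw [star_neg, neg_mul_neg]
        exact hQu
      rw [htrace]
      calc -((((U t * (W' * (U t)ᴴ)) * Δ t).trace).re)
          = (((-(U t * (W' * (U t)ᴴ))) * Δ t).trace).re := by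
            rw [Matrix.neg_mul, Matrix.trace_neg, Complex.neg_re]
      _ ≤ traceNorm (Δ t) := re_trace_mul_le_traceNorm _ _ hnegu
      _ ≤ C * traceNorm (ρ t) := hCbound t ht (ρ t)
      _ = C := by rw [hρnorm t ht, mul_one]
    rw [Real.norm_eq_abs, abs_le]
    exact ⟨by linarith, hd1⟩
  have hmvt := norm_image_sub_le_of_norm_deriv_le_segment'
    (f := g) (f' := g') (C := C) (a := 0) (b := T)
    (fun x hx => (key x hx).hasDerivWithinAt)
    (fun x hx => hbound x (Set.Ico_subset_Icc_self hx)) T hTT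
  rw [sub_zero, Real.norm_eq_abs] at hmvt
  -- identify g T - g 0 with the trace norm
  have hgT : g T = ((W * ρ T).trace).re := by
    rw [hgdef]
    show ((W' * ((U T)ᴴ * ρ T * U T)).trace).re = _
    rw [show W' * ((U T)ᴴ * ρ T * U T) = (W' * (U T)ᴴ * ρ T) * U T by
      simp only [Matrix.mul_assoc]]
    rw [Matrix.trace_mul_comm]
    congr 2
    rw [hW'def]
    rw [show U T * ((U T)ᴴ * W * U T * (U T)ᴴ * ρ T) = (U T * (U T)ᴴ) * W * (U T * (U T)ᴴ) * ρ T by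
      simp only [Matrix.mul_assoc]]
    rw [← Matrix.star_eq_conjTranspose, (Matrix.mem_unitaryGroup_iff).mp hUTu, one_mul,
      Matrix.mul_one]
  have hg0 : g 0 = ((W * ρ 0).trace).re := by
    rw [hgdef]
    show ((W' * ((U 0)ᴴ * ρ 0 * U 0)).trace).re = _
    rw [hU0]
    rw [show (1 : Matrix (Fin d) (Fin d) ℂ)ᴴ * ρ 0 * 1 = ρ 0 by simp]
    rw [hW'def]
    rw [show (U T)ᴴ * W * U T * ρ 0 = (U T)ᴴ * (W * (U T * ρ 0)) by simp only [Matrix.mul_assoc]]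
    rw [Matrix.trace_mul_comm]
    rw [show W * (U T * ρ 0) * (U T)ᴴ = W * (U T * ρ 0 * (U T)ᴴ) by simp only [Matrix.mul_assoc]]
    rw [hUfix T hTT]
  have hfinal : traceNorm (ρ T - ρ 0) = g T - g 0 := by
    rw [hgT, hg0, ← hWeq, Matrix.mul_sub, Matrix.trace_sub, Complex.sub_re]
  have h1 : traceNorm (ρ T - ρ 0) ≤ C * T := by
    rw [hfinal]
    calc g T - g 0 ≤ |g T - g 0| := le_abs_self _
    _ ≤ C * T := hmvt
  refine ⟨h1, fun hCpos => ?_⟩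
  rw [div_le_iff₀ hCpos, mul_comm]
  exact h1
end

section
/- Let H₀ be a Hermitian d×d complex matrix with largest eigenvalue E_max and smallest eigenvalue E_min, and define the commutator superoperator L(A) = −i·(H₀·A − A·H₀) on d×d complex matrices. Then the operator norm of L with respect to the Frobenius norm equals the spectral diameter of H₀: sup over A ≠ 0 of ‖L(A)‖₂ / ‖A‖₂ = E_max − E_min, where ‖A‖₂ = √(Tr(AᴴA)). -/
open Matrix
open scoped ComplexOrder

/-- Frobenius (Hilbert–Schmidt) norm: `‖A‖₂ = √(Tr (Aᴴ A))`. -/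
noncomputable def frobNorm {d : ℕ} (A : Matrix (Fin d) (Fin d) ℂ) : ℝ :=
  Real.sqrt ((Aᴴ * A).trace.re)

noncomputable def frobSq {d : ℕ} (A : Matrix (Fin d) (Fin d) ℂ) : ℝ :=
  ∑ i, ∑ j, Complex.normSq (A i j)

lemma trace_re_eq {d : ℕ} (A : Matrix (Fin d) (Fin d) ℂ) :
    (Aᴴ * A).trace.re = frobSq A := by
  have : (Aᴴ * A).trace = ((frobSq A : ℝ) : ℂ) := by
    simp only [trace, diag, mul_apply, conjTranspose_apply, frobSq]
    push_cast
    rw [Finset.sum_comm]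
    congr 1; ext i; congr 1; ext j
    rw [mul_comm]; exact Complex.mul_conj _
  rw [this, Complex.ofReal_re]

lemma frobNorm_eq {d : ℕ} (A : Matrix (Fin d) (Fin d) ℂ) :
    frobNorm A = Real.sqrt (frobSq A) := by
  rw [frobNorm, trace_re_eq]

lemma frobSq_nonneg {d : ℕ} (A : Matrix (Fin d) (Fin d) ℂ) : 0 ≤ frobSq A :=
  Finset.sum_nonneg fun _ _ => Finset.sum_nonneg fun _ _ => Complex.normSq_nonneg _

lemma frobSq_pos {d : ℕ} {A : Matrix (Fin d) (Fin d) ℂ} (hA : A ≠ 0) : 0 < frobSq A := by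
  obtain ⟨i, j, hij⟩ : ∃ i j, A i j ≠ 0 := by
    by_contra h; push_neg at h; exact hA (by ext i j; simp [h i j])
  have h1 : 0 < Complex.normSq (A i j) := Complex.normSq_pos.mpr hij
  have : Complex.normSq (A i j) ≤ frobSq A := by
    calc Complex.normSq (A i j) ≤ ∑ j', Complex.normSq (A i j') :=
          Finset.single_le_sum (fun k _ => Complex.normSq_nonneg (A i k)) (Finset.mem_univ j)
      _ ≤ frobSq A := Finset.single_le_sum
          (fun k (_ : k ∈ Finset.univ) => Finset.sum_nonneg fun l _ => Complex.normSq_nonneg (A k l))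
          (Finset.mem_univ i)
  linarith

lemma frobNorm_pos {d : ℕ} {A : Matrix (Fin d) (Fin d) ℂ} (hA : A ≠ 0) : 0 < frobNorm A := by
  rw [frobNorm_eq]; exact Real.sqrt_pos.mpr (frobSq_pos hA)

lemma frobNorm_smul {d : ℕ} (c : ℂ) (A : Matrix (Fin d) (Fin d) ℂ) :
    frobNorm (c • A) = ‖c‖ * frobNorm A := by
  rw [frobNorm_eq, frobNorm_eq]
  have : frobSq (c • A) = Complex.normSq c * frobSq A := by
    simp only [frobSq, Finset.mul_sum, Matrix.smul_apply, smul_eq_mul, Complex.normSq_mul]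
  rw [this, Real.sqrt_mul (Complex.normSq_nonneg c), Complex.norm_def]

lemma frobNorm_conj {d : ℕ} (U : Matrix.unitaryGroup (Fin d) ℂ) (A : Matrix (Fin d) (Fin d) ℂ) :
    frobNorm ((U : Matrix (Fin d) (Fin d) ℂ) * A * star (U : Matrix (Fin d) (Fin d) ℂ)) = frobNorm A := by
  unfold frobNorm
  congr 2
  have h1 : star (U : Matrix (Fin d) (Fin d) ℂ) * (U : Matrix (Fin d) (Fin d) ℂ) = 1 := Unitary.coe_star_mul_self U
  have h2 : (U : Matrix (Fin d) (Fin d) ℂ) * star (U : Matrix (Fin d) (Fin d) ℂ) = 1 :=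
    Unitary.coe_mul_star_self U
  have hstar : ((U : Matrix (Fin d) (Fin d) ℂ) * A * star (U : Matrix (Fin d) (Fin d) ℂ))ᴴ
      = (U : Matrix (Fin d) (Fin d) ℂ) * Aᴴ * star (U : Matrix (Fin d) (Fin d) ℂ) := by
    simp [conjTranspose_mul, star_eq_conjTranspose, Matrix.mul_assoc]
  rw [hstar]
  have : (U : Matrix (Fin d) (Fin d) ℂ) * Aᴴ * star (U : Matrix (Fin d) (Fin d) ℂ) *
      ((U : Matrix (Fin d) (Fin d) ℂ) * A * star (U : Matrix (Fin d) (Fin d) ℂ))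
      = (U : Matrix (Fin d) (Fin d) ℂ) * (Aᴴ * A) * star (U : Matrix (Fin d) (Fin d) ℂ) := by
    calc _ = (U : Matrix (Fin d) (Fin d) ℂ) * (Aᴴ * ((star (U : Matrix (Fin d) (Fin d) ℂ) * (U : Matrix (Fin d) (Fin d) ℂ)) * (A * star (U : Matrix (Fin d) (Fin d) ℂ)))) := by
          simp only [Matrix.mul_assoc]
      _ = _ := by rw [h1]; simp only [Matrix.one_mul, Matrix.mul_assoc]
  rw [this, Matrix.trace_mul_cycle, ← Matrix.mul_assoc, h1, Matrix.one_mul]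

lemma diag_comm_frob_le {d : ℕ} (f : Fin d → ℝ) (B : Matrix (Fin d) (Fin d) ℂ)
    (M : ℝ) (hM0 : 0 ≤ M) (hM : ∀ i j, |f i - f j| ≤ M) :
    frobNorm (diagonal (Complex.ofReal ∘ f) * B - B * diagonal (Complex.ofReal ∘ f))
      ≤ M * frobNorm B := by
  rw [frobNorm_eq, frobNorm_eq]
  have hsq : frobSq (diagonal (Complex.ofReal ∘ f) * B - B * diagonal (Complex.ofReal ∘ f))
      ≤ M ^ 2 * frobSq B := by
    rw [frobSq, frobSq, Finset.mul_sum]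
    refine Finset.sum_le_sum fun i _ => ?_
    rw [Finset.mul_sum]
    refine Finset.sum_le_sum fun j _ => ?_
    have hentry : (diagonal (Complex.ofReal ∘ f) * B - B * diagonal (Complex.ofReal ∘ f)) i j
        = ((f i - f j : ℝ) : ℂ) * B i j := by
      simp only [Matrix.sub_apply, diagonal_mul, mul_diagonal, Function.comp]
      push_cast
      ring
    rw [hentry, Complex.normSq_mul, Complex.normSq_ofReal]
    have h1 : (f i - f j) * (f i - f j) ≤ M ^ 2 := by
      have := hM i j
      nlinarith [abs_nonneg (f i - f j), sq_abs (f i - f j)]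
    nlinarith [Complex.normSq_nonneg (B i j)]
  calc Real.sqrt (frobSq (diagonal (Complex.ofReal ∘ f) * B - B * diagonal (Complex.ofReal ∘ f)))
      ≤ Real.sqrt (M ^ 2 * frobSq B) := Real.sqrt_le_sqrt hsq
    _ = M * Real.sqrt (frobSq B) := by
        rw [Real.sqrt_mul (sq_nonneg M), Real.sqrt_sq hM0]

/-- Appendix C of the paper: for a Hermitian matrix `H₀` with
largest eigenvalue `E_max` and smallest eigenvalue `E_min`, the induced 2-norm of the
commutator superoperator `L(A) = −i(H₀A − AH₀)` equals the spectral diameter: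
`sup_{A ≠ 0} ‖L(A)‖₂ / ‖A‖₂ = E_max − E_min`. -/
theorem commutator_two_norm (d : ℕ) (hd : 1 ≤ d)
    (H₀ : Matrix (Fin d) (Fin d) ℂ) (hH₀ : H₀.IsHermitian) :
    sSup {r : ℝ | ∃ A : Matrix (Fin d) (Fin d) ℂ, A ≠ 0 ∧
        r = frobNorm ((-Complex.I) • (H₀ * A - A * H₀)) / frobNorm A}
      = (⨆ i, hH₀.eigenvalues i) - (⨅ i, hH₀.eigenvalues i) := by
  have hne : Nonempty (Fin d) := ⟨⟨0, hd⟩⟩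
  set f := hH₀.eigenvalues with hf
  set U := hH₀.eigenvectorUnitary with hU
  set D : Matrix (Fin d) (Fin d) ℂ := diagonal (Complex.ofReal ∘ f) with hD
  have hspec : H₀ = (U : Matrix (Fin d) (Fin d) ℂ) * D * star (U : Matrix (Fin d) (Fin d) ℂ) :=
    hH₀.spectral_theorem
  have h1 : star (U : Matrix (Fin d) (Fin d) ℂ) * (U : Matrix (Fin d) (Fin d) ℂ) = 1 := Unitary.coe_star_mul_self U
  have h2 : (U : Matrix (Fin d) (Fin d) ℂ) * star (U : Matrix (Fin d) (Fin d) ℂ) = 1 :=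
    Unitary.coe_mul_star_self U
  -- max / min eigenvalues
  obtain ⟨i₀, hi₀⟩ := Finite.exists_max f
  obtain ⟨j₀, hj₀⟩ := Finite.exists_min f
  have hmax : (⨆ i, f i) = f i₀ :=
    le_antisymm (ciSup_le hi₀) (le_ciSup (Set.Finite.bddAbove (Set.finite_range f)) i₀)
  have hmin : (⨅ i, f i) = f j₀ :=
    le_antisymm (ciInf_le (Set.Finite.bddBelow (Set.finite_range f)) j₀) (le_ciInf hj₀)
  set M : ℝ := f i₀ - f j₀ with hM
  have hM0 : 0 ≤ M := sub_nonneg.mpr (hj₀ i₀)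
  -- commutator identity
  have hcomm : ∀ A : Matrix (Fin d) (Fin d) ℂ,
      H₀ * A - A * H₀ = (U : Matrix (Fin d) (Fin d) ℂ) *
        (D * (star (U : Matrix (Fin d) (Fin d) ℂ) * A * (U : Matrix (Fin d) (Fin d) ℂ))
          - (star (U : Matrix (Fin d) (Fin d) ℂ) * A * (U : Matrix (Fin d) (Fin d) ℂ)) * D) *
        star (U : Matrix (Fin d) (Fin d) ℂ) := by
    intro A
    rw [hspec]
    rw [Matrix.mul_sub, Matrix.sub_mul]
    congr 1
    · calc (U : Matrix (Fin d) (Fin d) ℂ) * D * star (U : Matrix (Fin d) (Fin d) ℂ) * A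
          = (U : Matrix (Fin d) (Fin d) ℂ) * (D * (star (U : Matrix (Fin d) (Fin d) ℂ) * A *
              ((U : Matrix (Fin d) (Fin d) ℂ) * star (U : Matrix (Fin d) (Fin d) ℂ)))) := by
            rw [h2]; simp only [Matrix.mul_one, Matrix.mul_assoc]
        _ = _ := by simp only [Matrix.mul_assoc]
    · calc A * ((U : Matrix (Fin d) (Fin d) ℂ) * D * star (U : Matrix (Fin d) (Fin d) ℂ))
          = ((U : Matrix (Fin d) (Fin d) ℂ) * star (U : Matrix (Fin d) (Fin d) ℂ)) * A *
              ((U : Matrix (Fin d) (Fin d) ℂ) * D * star (U : Matrix (Fin d) (Fin d) ℂ)) := by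
            rw [h2, Matrix.one_mul]
        _ = _ := by simp only [Matrix.mul_assoc]
  -- element of star U as unitary
  have hconj' : ∀ A : Matrix (Fin d) (Fin d) ℂ,
      frobNorm (star (U : Matrix (Fin d) (Fin d) ℂ) * A * (U : Matrix (Fin d) (Fin d) ℂ)) = frobNorm A := by
    intro A
    have := frobNorm_conj (star U) A
    simpa using this
  -- upper bound
  have hub : ∀ r ∈ {r : ℝ | ∃ A : Matrix (Fin d) (Fin d) ℂ, A ≠ 0 ∧
      r = frobNorm ((-Complex.I) • (H₀ * A - A * H₀)) / frobNorm A}, r ≤ M := by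
    rintro r ⟨A, hA, rfl⟩
    have hpos := frobNorm_pos hA
    rw [div_le_iff₀ hpos]
    rw [frobNorm_smul]
    simp only [norm_neg, Complex.norm_I, one_mul]
    rw [hcomm A, frobNorm_conj U]
    calc frobNorm (D * (star (U : Matrix (Fin d) (Fin d) ℂ) * A * (U : Matrix (Fin d) (Fin d) ℂ))
          - (star (U : Matrix (Fin d) (Fin d) ℂ) * A * (U : Matrix (Fin d) (Fin d) ℂ)) * D)
        ≤ M * frobNorm (star (U : Matrix (Fin d) (Fin d) ℂ) * A * (U : Matrix (Fin d) (Fin d) ℂ)) := by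
          refine diag_comm_frob_le f _ M hM0 fun i j => ?_
          rw [abs_sub_le_iff]
          constructor <;> [skip; skip] <;>
            · have := hi₀ i; have := hj₀ j; have := hi₀ j; have := hj₀ i; simp only [hM]; linarith
      _ = M * frobNorm A := by rw [hconj' A]
  -- witness
  set B : Matrix (Fin d) (Fin d) ℂ := single i₀ j₀ 1 with hB
  set A₀ : Matrix (Fin d) (Fin d) ℂ :=
    (U : Matrix (Fin d) (Fin d) ℂ) * B * star (U : Matrix (Fin d) (Fin d) ℂ) with hA₀
  have hBne : B ≠ 0 := by
    intro h
    have : B i₀ j₀ = 0 := by rw [h]; rfl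
    simp [hB, single_apply_same] at this
  have hA₀ne : A₀ ≠ 0 := by
    intro h
    have : frobNorm A₀ = frobNorm B := frobNorm_conj U B
    rw [h] at this
    have hb := frobNorm_pos hBne
    rw [← this] at hb
    simp [frobNorm] at hb
  have hDB : D * B - B * D = ((M : ℝ) : ℂ) • B := by
    ext i j
    have hentry : (D * B - B * D) i j = ((f i - f j : ℝ) : ℂ) * B i j := by
      simp only [Matrix.sub_apply, hD, diagonal_mul, mul_diagonal, Function.comp]
      push_cast; ring
    rw [hentry]
    simp only [Matrix.smul_apply, smul_eq_mul, hB, single, of_apply]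
    split_ifs with h
    · obtain ⟨h1', h2'⟩ := h; subst h1'; subst h2'
      simp [hM]
    · simp
  have hcommA₀ : H₀ * A₀ - A₀ * H₀ = ((M : ℝ) : ℂ) • A₀ := by
    rw [hcomm A₀]
    have : star (U : Matrix (Fin d) (Fin d) ℂ) * A₀ * (U : Matrix (Fin d) (Fin d) ℂ) = B := by
      rw [hA₀]
      calc star (U : Matrix (Fin d) (Fin d) ℂ) *
            ((U : Matrix (Fin d) (Fin d) ℂ) * B * star (U : Matrix (Fin d) (Fin d) ℂ)) * U
          = (star (U : Matrix (Fin d) (Fin d) ℂ) * (U : Matrix (Fin d) (Fin d) ℂ)) * B *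
              (star (U : Matrix (Fin d) (Fin d) ℂ) * (U : Matrix (Fin d) (Fin d) ℂ)) := by
            simp only [Matrix.mul_assoc]
        _ = B := by rw [h1]; simp
    rw [this, hDB, Matrix.mul_smul, Matrix.smul_mul]
  have hwit : M ∈ {r : ℝ | ∃ A : Matrix (Fin d) (Fin d) ℂ, A ≠ 0 ∧
      r = frobNorm ((-Complex.I) • (H₀ * A - A * H₀)) / frobNorm A} := by
    refine ⟨A₀, hA₀ne, ?_⟩
    rw [hcommA₀, smul_smul, frobNorm_smul]
    have : ‖-Complex.I * ((M : ℝ) : ℂ)‖ = M := by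
      simp [abs_of_nonneg hM0]
    rw [this, mul_div_assoc, div_self (ne_of_gt (frobNorm_pos hA₀ne)), mul_one]
  rw [hmax, hmin]
  exact le_antisymm (csSup_le ⟨M, hwit⟩ hub) (le_csSup ⟨M, hub⟩ hwit)
end
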